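/- Let E^i (i ≥ 1) be the linear vector fields on the space of sequences (z_j)_{j∈ℤ\{0}} given by E^i(z) = z_i e_i − z_{−i} e_{−i}, so [E^i, z^Q e_l] = ((Q,μ^i) − μ^i_l) z^Q e_l with μ^i_j = δ^i_j − δ^i_{−j}. Suppose a family {F^i} of homogeneous polynomial vector fields of degree d is a nonresonant cocycle, i.e. ((Q,μ^i) − μ^i_l) F^j_{Q,l} = ((Q,μ^j) − μ^j_l) F^i_{Q,l} for all i,j,Q,l, and for each (Q,l) with some F^j_{Q,l} ≠ 0 there exists i with (Q,μ^i) − μ^i_l ≠ 0. Then there exists a unique formal homogeneous polynomial vector field U of degree d with no resonant terms such that [E^i, U] = F^i for all i ≥ 1. -/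

import Mathlib

/-- Nonzero integers, the index set of the sequence space. -/
abbrev Zstar : Type := {j : ℤ // j ≠ 0}

/-- `μ^i_j = δ^i_j - δ^i_{-j}`. -/
def mu (i : ℕ) (j : Zstar) : ℤ :=
  (if (j : ℤ) = (i : ℤ) then 1 else 0) - (if (j : ℤ) = -(i : ℤ) then 1 else 0)

/-- The eigenvalue `(Q, μ^i) - μ^i_l` of `[E^i, ·]` on the monomial `z^Q e_l`. -/
def lam (i : ℕ) (Q : Zstar →₀ ℕ) (l : Zstar) : ℤ :=
  (Q.sum fun j n => (n : ℤ) * mu i j) - mu i l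

/-- If a family `{F^i}` of homogeneous polynomial vector fields of degree `d`
(given by its monomial coefficients `F i Q l`) is a nonresonant cocycle, then there
is a unique homogeneous vector field `U` of degree `d` with no resonant terms such
that `[E^i, U] = F^i` for all `i ≥ 1`, i.e. `lam i Q l * U Q l = F i Q l`. -/
theorem stmt9 (d : ℕ) (F : ℕ → (Zstar →₀ ℕ) → Zstar → ℂ)
    (hdeg : ∀ i Q l, 1 ≤ i → F i Q l ≠ 0 → (Q.sum fun _ n => n) = d)
    (hcoc : ∀ i j Q l, 1 ≤ i → 1 ≤ j →
      (lam i Q l : ℂ) * F j Q l = (lam j Q l : ℂ) * F i Q l)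
    (hnres : ∀ Q l, (∃ j, 1 ≤ j ∧ F j Q l ≠ 0) → ∃ i, 1 ≤ i ∧ lam i Q l ≠ 0) :
    ∃! U : (Zstar →₀ ℕ) → Zstar → ℂ,
      (∀ Q l, (∀ i, 1 ≤ i → lam i Q l = 0) → U Q l = 0) ∧
      (∀ Q l, U Q l ≠ 0 → (Q.sum fun _ n => n) = d) ∧
      (∀ i Q l, 1 ≤ i → (lam i Q l : ℂ) * U Q l = F i Q l) := by
  classical
  refine ⟨fun Q l => if h : ∃ i, 1 ≤ i ∧ lam i Q l ≠ 0 then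
      F h.choose Q l / (lam h.choose Q l : ℂ) else 0, ⟨?_, ?_, ?_⟩, ?_⟩
  · intro Q l hall
    dsimp only
    rw [dif_neg]
    rintro ⟨i, hi, hl⟩
    exact hl (hall i hi)
  · intro Q l hU
    dsimp only at hU
    by_cases h : ∃ i, 1 ≤ i ∧ lam i Q l ≠ 0
    · rw [dif_pos h] at hU
      exact hdeg h.choose Q l h.choose_spec.1 fun hF => hU (by simp [hF])
    · exact absurd (dif_neg h) hU
  · intro j Q l hj
    dsimp only
    by_cases h : ∃ i, 1 ≤ i ∧ lam i Q l ≠ 0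
    · rw [dif_pos h]
      obtain ⟨hi1, hi2⟩ := h.choose_spec
      have hne : (lam h.choose Q l : ℂ) ≠ 0 := Int.cast_ne_zero.mpr hi2
      field_simp
      exact hcoc j h.choose Q l hj hi1
    · rw [dif_neg h, mul_zero]
      by_contra hF
      exact h (hnres Q l ⟨j, hj, fun h0 => hF h0.symm⟩)
  · intro V ⟨hV1, hV2, hV3⟩
    funext Q l
    by_cases h : ∃ i, 1 ≤ i ∧ lam i Q l ≠ 0
    · rw [dif_pos h]
      obtain ⟨hi1, hi2⟩ := h.choose_spec
      have hne : (lam h.choose Q l : ℂ) ≠ 0 := Int.cast_ne_zero.mpr hi2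
      rw [eq_div_iff hne, mul_comm]
      exact hV3 h.choose Q l hi1
    · rw [dif_neg h]
      exact hV1 Q l fun i hi => by_contra fun hl => h ⟨i, hi, hl⟩
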